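/- arXiv:2601.06609 — 2 statements merged into one kernel-verified Lean document; each statement's English description precedes it below -/
import Mathlib

section
/- Let C be an E-linear code. Then the left symplectic hull LSHull(C) = C ∩ C^{⊥_{S_L}} satisfies (LSHull(C))_Res = C_Res ∩ (C_Res)^{⊥_S} and (LSHull(C))_Tor = (C_Res)^{⊥_S} ∩ C_Tor. -/
open Finset

/-- The non-unital ring `E`, realized as pairs `(u, v) ∈ F₂ × F₂`
representing `uκ + vζ`. -/
def Ering : Type := (ZMod 2) × (ZMod 2)

namespace Ering

instance : AddCommGroup Ering := inferInstanceAs (AddCommGroup ((ZMod 2) × (ZMod 2)))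
instance : DecidableEq Ering := inferInstanceAs (DecidableEq ((ZMod 2) × (ZMod 2)))
instance : Fintype Ering := inferInstanceAs (Fintype ((ZMod 2) × (ZMod 2)))

instance : Mul Ering := ⟨fun a b => (a.1 * b.1, a.2 * b.1)⟩

instance : NonUnitalRing Ering :=
  { (inferInstance : AddCommGroup Ering), (inferInstance : Mul Ering) with
    left_distrib := by decide
    right_distrib := by decide
    zero_mul := by decide
    mul_zero := by decide
    mul_assoc := by decide }

/-- The generator κ. -/
def kappa : Ering := ((1 : ZMod 2), (0 : ZMod 2))
/-- The generator τ. -/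
def tau : Ering := ((1 : ZMod 2), (1 : ZMod 2))
/-- ζ = κ + τ. -/
def zeta : Ering := ((0 : ZMod 2), (1 : ZMod 2))

/-- The scalar action of `F₂` on `E`: `u • e = e` if `u = 1`, else `0`. -/
def fsmul (u : ZMod 2) (e : Ering) : Ering := if u = 1 then e else 0

/-- `E`-vectors of length `2n`, written as a pair `(u | v)` of halves of length `n`. -/
abbrev VE (n : ℕ) := (Fin n → Ering) × (Fin n → Ering)

/-- `F₂`-vectors of length `2n`, written as a pair of halves of length `n`. -/
abbrev VF (n : ℕ) := (Fin n → ZMod 2) × (Fin n → ZMod 2)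

/-- Symplectic inner product on `E^{2n}`: `⟨(u|v),(u'|v')⟩ₛ = ⟨u,v'⟩ + ⟨v,u'⟩`. -/
def sympE {n : ℕ} (x y : VE n) : Ering := ∑ i, x.1 i * y.2 i + ∑ i, x.2 i * y.1 i

/-- Symplectic inner product on `F₂^{2n}`. -/
def sympF {n : ℕ} (x y : VF n) : ZMod 2 := ∑ i, x.1 i * y.2 i + ∑ i, x.2 i * y.1 i

/-- An `E`-linear code: a left `E`-submodule of `E^{2n}`. -/
def IsLinearCode {n : ℕ} (C : Set (VE n)) : Prop :=
  (0 : VE n) ∈ C ∧ (∀ x ∈ C, ∀ y ∈ C, x + y ∈ C) ∧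
    (∀ e : Ering, ∀ x ∈ C, ((fun i => e * x.1 i, fun i => e * x.2 i) : VE n) ∈ C)

/-- Componentwise reduction `π : E^{2n} → F₂^{2n}`, `π(uκ + vζ) = u`. -/
def resVec {n : ℕ} (x : VE n) : VF n := (fun i => (x.1 i).1, fun i => (x.2 i).1)

/-- For `e ∈ E` and `v ∈ F₂^{2n}`, the vector `ev ∈ E^{2n}` with entries `vᵢ • e`. -/
def evec {n : ℕ} (e : Ering) (v : VF n) : VE n :=
  (fun i => fsmul (v.1 i) e, fun i => fsmul (v.2 i) e)

/-- The residue code `C_Res = π(C)`. -/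
def resCode {n : ℕ} (C : Set (VE n)) : Set (VF n) := resVec '' C

/-- The torsion code `C_Tor = {v : ζv ∈ C}`. -/
def torCode {n : ℕ} (C : Set (VE n)) : Set (VF n) := {v | evec zeta v ∈ C}

/-- The left symplectic dual. -/
def leftDual {n : ℕ} (C : Set (VE n)) : Set (VE n) := {z | ∀ w ∈ C, sympE z w = 0}

/-- The right symplectic dual. -/
def rightDual {n : ℕ} (C : Set (VE n)) : Set (VE n) := {z | ∀ w ∈ C, sympE w z = 0}

/-- The two-sided symplectic dual. -/
def dual {n : ℕ} (C : Set (VE n)) : Set (VE n) := leftDual C ∩ rightDual C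

/-- The binary symplectic dual of `D ⊆ F₂^{2n}`. -/
def dualF {n : ℕ} (D : Set (VF n)) : Set (VF n) := {z | ∀ w ∈ D, sympF z w = 0}

/-- The two-sided symplectic hull. -/
def SHull {n : ℕ} (C : Set (VE n)) : Set (VE n) := C ∩ dual C

/-- The left symplectic hull. -/
def LSHull {n : ℕ} (C : Set (VE n)) : Set (VE n) := C ∩ leftDual C

/-- The right symplectic hull. -/
def RSHull {n : ℕ} (C : Set (VE n)) : Set (VE n) := C ∩ rightDual C

/-- Symplectic hull of a binary code. -/
def SHullF {n : ℕ} (D : Set (VF n)) : Set (VF n) := D ∩ dualF D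

/-- A free `E`-linear code: residue and torsion codes coincide. -/
def IsFree {n : ℕ} (C : Set (VE n)) : Prop := resCode C = torCode C

end Ering

open Ering
namespace EringAux

open Ering

/-- second components of a vector -/
def betaVec {n : ℕ} (x : VE n) : VF n := (fun i => (x.1 i).2, fun i => (x.2 i).2)

lemma mul_fst (a b : Ering) : (a * b).1 = a.1 * b.1 := rfl
lemma mul_snd (a b : Ering) : (a * b).2 = a.2 * b.1 := rfl

lemma fst_sum {n : ℕ} (f : Fin n → Ering) : (∑ i, f i).1 = ∑ i, (f i).1 :=
  map_sum (AddMonoidHom.fst (ZMod 2) (ZMod 2)) f Finset.univ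

lemma snd_sum {n : ℕ} (f : Fin n → Ering) : (∑ i, f i).2 = ∑ i, (f i).2 :=
  map_sum (AddMonoidHom.snd (ZMod 2) (ZMod 2)) f Finset.univ

lemma sympE_fst {n : ℕ} (x y : VE n) :
    (sympE x y).1 = sympF (resVec x) (resVec y) := by
  show (∑ i, x.1 i * y.2 i).1 + (∑ i, x.2 i * y.1 i).1 = _
  rw [fst_sum, fst_sum]; rfl

lemma sympE_snd {n : ℕ} (x y : VE n) :
    (sympE x y).2 = sympF (betaVec x) (resVec y) := by
  show (∑ i, x.1 i * y.2 i).2 + (∑ i, x.2 i * y.1 i).2 = _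
  rw [snd_sum, snd_sum]; rfl

lemma sympE_eq_zero_iff {n : ℕ} (x y : VE n) :
    sympE x y = 0 ↔ sympF (resVec x) (resVec y) = 0 ∧ sympF (betaVec x) (resVec y) = 0 := by
  constructor
  · intro h
    refine ⟨?_, ?_⟩
    · rw [← sympE_fst, h]; rfl
    · rw [← sympE_snd, h]; rfl
  · rintro ⟨h1, h2⟩
    refine Prod.ext ?_ ?_
    · rw [sympE_fst]; exact h1
    · rw [sympE_snd]; exact h2

lemma kappa_mul (e : Ering) : kappa * e = ((e.1, 0) : (ZMod 2) × (ZMod 2)) := by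
  show (1 * e.1, 0 * e.1) = _
  rw [one_mul, zero_mul]

lemma fsmul_kappa (u : ZMod 2) : fsmul u kappa = ((u, 0) : (ZMod 2) × (ZMod 2)) := by
  fin_cases u <;> rfl

lemma fsmul_zeta (u : ZMod 2) : fsmul u zeta = ((0, u) : (ZMod 2) × (ZMod 2)) := by
  fin_cases u <;> rfl

lemma kappa_smul {n : ℕ} (x : VE n) :
    ((fun i => kappa * x.1 i, fun i => kappa * x.2 i) : VE n) = evec kappa (resVec x) := by
  refine Prod.ext ?_ ?_ <;> funext i <;>
    simp only [evec, resVec, kappa_mul, fsmul_kappa] <;> rfl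

lemma resVec_evec_kappa {n : ℕ} (v : VF n) : resVec (evec kappa v) = v := by
  refine Prod.ext ?_ ?_ <;> funext i <;>
    simp only [resVec, evec, fsmul_kappa]

lemma betaVec_evec_kappa {n : ℕ} (v : VF n) : betaVec (evec kappa v) = 0 := by
  refine Prod.ext ?_ ?_ <;> funext i <;>
    simp only [betaVec, evec, fsmul_kappa] <;> rfl

lemma resVec_evec_zeta {n : ℕ} (v : VF n) : resVec (evec zeta v) = 0 := by
  refine Prod.ext ?_ ?_ <;> funext i <;>
    simp only [resVec, evec, fsmul_zeta] <;> rfl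

lemma betaVec_evec_zeta {n : ℕ} (v : VF n) : betaVec (evec zeta v) = v := by
  refine Prod.ext ?_ ?_ <;> funext i <;>
    simp only [betaVec, evec, fsmul_zeta]

lemma sympF_zero_left {n : ℕ} (y : VF n) : sympF (0 : VF n) y = 0 := by
  unfold sympF
  simp

/-- membership in leftDual characterized via binary duals -/
lemma mem_leftDual_iff {n : ℕ} (C : Set (VE n)) (z : VE n) :
    z ∈ leftDual C ↔ resVec z ∈ dualF (resCode C) ∧ betaVec z ∈ dualF (resCode C) := by
  constructor
  · intro hz
    constructor <;> intro w hw <;> obtain ⟨x, hx, rfl⟩ := hw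
    · exact ((sympE_eq_zero_iff z x).1 (hz x hx)).1
    · exact ((sympE_eq_zero_iff z x).1 (hz x hx)).2
  · rintro ⟨h1, h2⟩ w hw
    exact (sympE_eq_zero_iff z w).2 ⟨h1 _ ⟨w, hw, rfl⟩, h2 _ ⟨w, hw, rfl⟩⟩

end EringAux

open EringAux in
/-- `(LSHull C)_Res = C_Res ∩ (C_Res)^{⊥_S}` and
`(LSHull C)_Tor = (C_Res)^{⊥_S} ∩ C_Tor`. -/
theorem Ering.lshull_res_tor {n : ℕ} (C : Set (VE n)) (hC : IsLinearCode C) :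
    resCode (LSHull C) = resCode C ∩ dualF (resCode C) ∧
    torCode (LSHull C) = dualF (resCode C) ∩ torCode C := by
  obtain ⟨h0, hadd, hsmul⟩ := hC
  constructor
  · ext v
    constructor
    · rintro ⟨x, ⟨hxC, hxD⟩, rfl⟩
      exact ⟨⟨x, hxC, rfl⟩, ((mem_leftDual_iff C x).1 hxD).1⟩
    · rintro ⟨⟨x, hxC, rfl⟩, hdual⟩
      refine ⟨evec kappa (resVec x), ⟨?_, ?_⟩, resVec_evec_kappa _⟩
      · rw [← kappa_smul]; exact hsmul kappa x hxC
      · rw [mem_leftDual_iff, resVec_evec_kappa, betaVec_evec_kappa]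
        refine ⟨hdual, ?_⟩
        intro w hw
        exact sympF_zero_left w
  · ext v
    constructor
    · rintro ⟨hC', hD⟩
      rw [mem_leftDual_iff, resVec_evec_zeta, betaVec_evec_zeta] at hD
      exact ⟨hD.2, hC'⟩
    · rintro ⟨hdual, hC'⟩
      refine ⟨hC', ?_⟩
      rw [mem_leftDual_iff, resVec_evec_zeta, betaVec_evec_zeta]
      exact ⟨fun w hw => sympF_zero_left w, hdual⟩
end

section
/- For any E-linear code C, (SHull(C))_Res ⊆ SHull(C_Res) and SHull(C_Tor) ⊆ (SHull(C))_Tor; moreover if C is free then both inclusions are equalities. -/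
open Finset

namespace Ering

/-- Second-component vector. -/
def secVec {n : ℕ} (x : VE n) : VF n := (fun i => (x.1 i).2, fun i => (x.2 i).2)

def fstHom : Ering →+ ZMod 2 := { toFun := fun e => e.1, map_zero' := rfl, map_add' := fun _ _ => rfl }
def sndHom : Ering →+ ZMod 2 := { toFun := fun e => e.2, map_zero' := rfl, map_add' := fun _ _ => rfl }

lemma sum_fst {n : ℕ} (f : Fin n → Ering) : (∑ i, f i).1 = ∑ i, (f i).1 :=
  map_sum fstHom f univ
lemma sum_snd {n : ℕ} (f : Fin n → Ering) : (∑ i, f i).2 = ∑ i, (f i).2 :=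
  map_sum sndHom f univ

lemma mul_fst (a b : Ering) : (a * b).1 = a.1 * b.1 := rfl
lemma mul_snd (a b : Ering) : (a * b).2 = a.2 * b.1 := rfl
lemma add_fst (a b : Ering) : (a + b).1 = a.1 + b.1 := rfl
lemma add_snd (a b : Ering) : (a + b).2 = a.2 + b.2 := rfl

lemma ering_eq_zero {e : Ering} (h1 : e.1 = 0) (h2 : e.2 = 0) : e = 0 := Prod.ext h1 h2

lemma sympE_fst {n : ℕ} (x y : VE n) :
    (sympE x y).1 = sympF (resVec x) (resVec y) := by
  show (_ + _ : Ering).1 = _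
  rw [add_fst, sum_fst, sum_fst]
  simp [sympF, resVec, mul_fst]

lemma sympE_snd {n : ℕ} (x y : VE n) :
    (sympE x y).2 = sympF (secVec x) (resVec y) := by
  show (_ + _ : Ering).2 = _
  rw [add_snd, sum_snd, sum_snd]
  simp [sympF, resVec, secVec, mul_snd]

lemma fsmul_zeta : ∀ u : ZMod 2, fsmul u zeta = ((0 : ZMod 2), u) := by
  intro u; fin_cases u <;> rfl
lemma zeta_mul : ∀ x : Ering, zeta * x = ((0 : ZMod 2), x.1) := by
  intro x; exact Prod.ext (zero_mul x.1) (one_mul x.1)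
lemma kappa_mul : ∀ x : Ering, kappa * x = (x.1, (0 : ZMod 2)) := by
  intro x; exact Prod.ext (one_mul x.1) (zero_mul x.1)
lemma add_kappa : ∀ a : Ering, a + kappa * a = ((0 : ZMod 2), a.2) := by
  intro a; exact Prod.ext (show a.1 + 1 * a.1 = 0 by rw [one_mul]; exact CharTwo.add_self_eq_zero _) (show a.2 + 0 * a.1 = a.2 by rw [zero_mul, add_zero])

lemma resVec_evec_zeta {n : ℕ} (v : VF n) : resVec (evec zeta v) = 0 := by
  refine Prod.ext ?_ ?_ <;> funext i <;> simp [resVec, evec, fsmul_zeta]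

lemma secVec_evec_zeta {n : ℕ} (v : VF n) : secVec (evec zeta v) = v := by
  refine Prod.ext ?_ ?_ <;> funext i <;> simp [secVec, evec, fsmul_zeta]

lemma sympF_comm {n : ℕ} (x y : VF n) : sympF x y = sympF y x := by
  unfold sympF
  rw [add_comm]
  congr 1 <;> exact Finset.sum_congr rfl fun i _ => mul_comm _ _

lemma sympF_zero_left {n : ℕ} (y : VF n) : sympF 0 y = 0 := by simp [sympF]
lemma sympF_zero_right {n : ℕ} (x : VF n) : sympF x 0 = 0 := by simp [sympF]

lemma res_mem_tor {n : ℕ} {C : Set (VE n)} (hC : IsLinearCode C) {w : VE n}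
    (hw : w ∈ C) : resVec w ∈ torCode C := by
  have h := hC.2.2 zeta w hw
  have key : evec zeta (resVec w) = (fun i => zeta * w.1 i, fun i => zeta * w.2 i) := by
    refine Prod.ext ?_ ?_ <;> funext i <;> simp [evec, resVec, fsmul_zeta, zeta_mul] <;> rfl
  show evec zeta (resVec w) ∈ C
  rw [key]; exact h

lemma sec_mem_tor {n : ℕ} {C : Set (VE n)} (hC : IsLinearCode C) {w : VE n}
    (hw : w ∈ C) : secVec w ∈ torCode C := by
  have hk := hC.2.2 kappa w hw
  have hadd := hC.2.1 w hw _ hk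
  have key : w + ((fun i => kappa * w.1 i, fun i => kappa * w.2 i) : VE n)
      = evec zeta (secVec w) := by
    refine Prod.ext ?_ ?_ <;> funext i
    · show w.1 i + kappa * w.1 i = fsmul ((w.1 i).2) zeta
      rw [fsmul_zeta]; exact add_kappa _
    · show w.2 i + kappa * w.2 i = fsmul ((w.2 i).2) zeta
      rw [fsmul_zeta]; exact add_kappa _
  show evec zeta (secVec w) ∈ C
  rw [← key]; exact hadd

end Ering

open Ering
/-- `(SHull C)_Res ⊆ SHull(C_Res)` and `SHull(C_Tor) ⊆ (SHull C)_Tor`,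
with equalities when `C` is free. -/
theorem Ering.shull_res_tor_incl {n : ℕ} (C : Set (VE n)) (hC : IsLinearCode C) :
    resCode (SHull C) ⊆ SHullF (resCode C) ∧
    SHullF (torCode C) ⊆ torCode (SHull C) ∧
    (IsFree C →
      resCode (SHull C) = SHullF (resCode C) ∧
      torCode (SHull C) = SHullF (torCode C)) := by
  have inc1 : resCode (SHull C) ⊆ SHullF (resCode C) := by
    rintro u ⟨z, ⟨hzC, hzL, _⟩, rfl⟩
    refine ⟨⟨z, hzC, rfl⟩, ?_⟩
    rintro w' ⟨w, hwC, rfl⟩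
    have h1 := congrArg Prod.fst (hzL w hwC)
    rwa [sympE_fst] at h1
  have inc2 : SHullF (torCode C) ⊆ torCode (SHull C) := by
    rintro v ⟨hvT, hvD⟩
    have hzv : evec zeta v ∈ C := hvT
    refine ⟨hzv, ?_, ?_⟩
    · intro w hw
      refine ering_eq_zero ?_ ?_
      · rw [sympE_fst, resVec_evec_zeta, sympF_zero_left]
      · rw [sympE_snd, secVec_evec_zeta]
        exact hvD _ (res_mem_tor hC hw)
    · intro w hw
      refine ering_eq_zero ?_ ?_
      · rw [sympE_fst, resVec_evec_zeta, sympF_zero_right]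
      · rw [sympE_snd, resVec_evec_zeta, sympF_zero_right]
  refine ⟨inc1, inc2, fun hfree => ⟨Set.Subset.antisymm inc1 ?_, Set.Subset.antisymm ?_ inc2⟩⟩
  · rintro u ⟨⟨z, hzC, rfl⟩, hud⟩
    set z' : VE n := (fun i => kappa * z.1 i, fun i => kappa * z.2 i) with hz'def
    have hz'C : z' ∈ C := hC.2.2 kappa z hzC
    have hres : resVec z' = resVec z := by
      refine Prod.ext ?_ ?_ <;> funext i <;> simp [hz'def, resVec, kappa_mul]
    have hsec : secVec z' = 0 := by
      refine Prod.ext ?_ ?_ <;> funext i <;> simp [hz'def, secVec, kappa_mul]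
    refine ⟨z', ⟨hz'C, ?_, ?_⟩, hres⟩
    · intro w hw
      refine ering_eq_zero ?_ ?_
      · rw [sympE_fst, hres]; exact hud _ ⟨w, hw, rfl⟩
      · rw [sympE_snd, hsec, sympF_zero_left]
    · intro w hw
      refine ering_eq_zero ?_ ?_
      · rw [sympE_fst, hres, sympF_comm]; exact hud _ ⟨w, hw, rfl⟩
      · rw [sympE_snd, hres, sympF_comm]
        exact hud _ (by rw [hfree]; exact sec_mem_tor hC hw)
  · rintro v hv
    obtain ⟨hC', hL, _⟩ := hv
    refine ⟨hC', ?_⟩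
    intro w' hw'
    have hw'' : w' ∈ resCode C := by rw [hfree]; exact hw'
    obtain ⟨w, hw, rfl⟩ := hw''
    have h2 := congrArg Prod.snd (hL w hw)
    rwa [sympE_snd, secVec_evec_zeta] at h2
end
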